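/- For positive integers m and nonnegative integers k, let c_{m,k} be defined by c_{m,0} = 1, c_{m,k} = Σ_{1 ≤ i_1 < i_2 < ⋯ < i_k ≤ m−1} i_1² i_2² ⋯ i_k² for 1 ≤ k ≤ m−1 (the k-th elementary symmetric polynomial of 1², 2², …, (m−1)²), and c_{m,k} = 0 for k ≥ m. Define real polynomials q_m by q_0 = Γ(1/2) = √π and the recurrence q_m(t) = (m − 1/2 − (m−1)² t) q_{m−1}(t) − t q'_{m−1}(t) for m ≥ 1. Then for every m ≥ 1, q_m(t) = Σ_{k=0}^{m−1} (−1)^k Γ(m − k + 1/2) c_{m,k} t^k. -/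

import Mathlib

open Real Finset

/-- `c m k` is the `k`-th elementary symmetric polynomial of `1², 2², …, (m-1)²`:
`c m 0 = 1`, `c m k = Σ_{1 ≤ i₁ < ⋯ < i_k ≤ m-1} i₁²⋯i_k²` for `1 ≤ k ≤ m-1`, and
`c m k = 0` for `k ≥ m`. -/
noncomputable def c (m k : ℕ) : ℝ :=
  ∑ A ∈ (Finset.Icc 1 (m - 1)).powersetCard k, ∏ i ∈ A, (i : ℝ) ^ 2

lemma c_zero (m : ℕ) : c m 0 = 1 := by simp [c]

lemma c_top (m : ℕ) (hm : 1 ≤ m) : c m m = 0 := by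
  have h : (Finset.Icc 1 (m - 1)).card < m := by
    rw [Nat.card_Icc]; omega
  simp [c, Finset.powersetCard_eq_empty.2 h]

lemma c_succ (m k : ℕ) (hm : 1 ≤ m) (hk : 1 ≤ k) :
    c (m + 1) k = c m k + (m : ℝ) ^ 2 * c m (k - 1) := by
  have hmem : m ∉ Finset.Icc 1 (m - 1) := by simp [Finset.mem_Icc]; omega
  have hIcc : Finset.Icc 1 (m + 1 - 1) = insert m (Finset.Icc 1 (m - 1)) := by
    have := Finset.insert_Icc_right_eq_Icc_add_one (a := 1) (b := m - 1) (by omega)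
    rw [show m - 1 + 1 = m from by omega] at this
    rw [show m + 1 - 1 = m from by omega, ← this]
  obtain ⟨j, rfl⟩ : ∃ j, k = j + 1 := ⟨k - 1, by omega⟩
  rw [c, hIcc, Finset.powersetCard_succ_insert hmem,
    Finset.sum_union]
  · congr 1
    · have hinj : ∀ A ∈ (Finset.Icc 1 (m - 1)).powersetCard j,
          ∀ B ∈ (Finset.Icc 1 (m - 1)).powersetCard j,
          insert m A = insert m B → A = B := by
        intro A hA B hB hAB
        have hmA : m ∉ A := fun h => hmem ((Finset.mem_powersetCard.1 hA).1 h)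
        have hmB : m ∉ B := fun h => hmem ((Finset.mem_powersetCard.1 hB).1 h)
        have := congrArg (fun s => Finset.erase s m) hAB
        simpa [Finset.erase_insert, hmA, hmB] using this
      rw [Finset.sum_image hinj]
      simp only [c, Nat.add_sub_cancel]
      rw [Finset.mul_sum]
      refine Finset.sum_congr rfl fun A hA => ?_
      have hmA : m ∉ A := fun h => hmem ((Finset.mem_powersetCard.1 hA).1 h)
      rw [Finset.prod_insert hmA]
  · rw [Finset.disjoint_right]
    intro A hA hA'
    obtain ⟨B, hB, rfl⟩ := Finset.mem_image.1 hA
    have : m ∈ Finset.Icc 1 (m - 1) :=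
      (Finset.mem_powersetCard.1 hA').1 (Finset.mem_insert_self m B)
    exact hmem this

noncomputable def aa (m k : ℕ) : ℝ :=
  (-1 : ℝ) ^ k * Real.Gamma ((m : ℝ) - (k : ℝ) + 1 / 2) * c m k

lemma half_ne (m k : ℕ) : (m : ℝ) - (k : ℝ) + 1 / 2 ≠ 0 := by
  intro h
  have h2 : ((2 * (m : ℤ) - 2 * (k : ℤ) : ℤ) : ℝ) = -1 := by push_cast; linarith
  have : (2 * (m : ℤ) - 2 * (k : ℤ)) = -1 := by exact_mod_cast h2
  omega

lemma aa_rec (m k : ℕ) (hm : 1 ≤ m) :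
    aa (m + 1) k = ((m : ℝ) + 1 / 2 - (k : ℝ)) * aa m k +
      (if k = 0 then 0 else -(m : ℝ) ^ 2 * aa m (k - 1)) := by
  rcases Nat.eq_zero_or_pos k with rfl | hk
  · simp only [if_pos rfl, aa, c_zero, Nat.cast_zero, pow_zero]
    push_cast
    have h1 : ((m : ℝ) + 1) - 0 + 1 / 2 = ((m : ℝ) - 0 + 1 / 2) + 1 := by ring
    have h0 : (m : ℝ) - 0 + 1 / 2 ≠ 0 := by
      have := half_ne m 0; push_cast at this ⊢; exact this
    rw [h1, Real.Gamma_add_one h0]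
    ring
  · rw [if_neg (by omega)]
    obtain ⟨j, rfl⟩ : ∃ j, k = j + 1 := ⟨k - 1, by omega⟩
    simp only [aa, c_succ m (j + 1) hm (by omega), Nat.add_sub_cancel]
    have h1 : ((m : ℝ) + 1) - ((j : ℝ) + 1) + 1 / 2 = ((m : ℝ) - ((j:ℝ)+1) + 1 / 2) + 1 := by
      ring
    have h2 : ((m : ℝ) + 1) - ((j : ℝ) + 1) + 1 / 2 = (m : ℝ) - (j : ℝ) + 1 / 2 := by ring
    push_cast
    rw [mul_add]
    congr 1
    · have h0 : (m : ℝ) - ((j : ℝ) + 1) + 1 / 2 ≠ 0 := by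
        have := half_ne m (j + 1); push_cast at this ⊢; exact this
      rw [h1, Real.Gamma_add_one h0]
      ring
    · rw [h2]
      have : (-1 : ℝ) ^ (j + 1) = -(-1 : ℝ) ^ j := by ring
      rw [this]
      ring

lemma aa_top (m : ℕ) (hm : 1 ≤ m) : aa m m = 0 := by simp [aa, c_top m hm]

lemma key (n : ℕ) (hn : 1 ≤ n) (t : ℝ) :
    ((n : ℝ) + 1 - 1 / 2 - (n : ℝ) ^ 2 * t) * (∑ k ∈ Finset.range n, aa n k * t ^ k)
      - t * (∑ k ∈ Finset.range n, aa n k * ((k : ℝ) * t ^ (k - 1)))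
    = ∑ k ∈ Finset.range (n + 1), aa (n + 1) k * t ^ k := by
  have hL : ((n : ℝ) + 1 - 1 / 2 - (n : ℝ) ^ 2 * t) * (∑ k ∈ Finset.range n, aa n k * t ^ k)
      - t * (∑ k ∈ Finset.range n, aa n k * ((k : ℝ) * t ^ (k - 1)))
      = ∑ k ∈ Finset.range n, (((n : ℝ) + 1 / 2 - (k : ℝ)) * aa n k * t ^ k
          - (n : ℝ) ^ 2 * aa n k * t ^ (k + 1)) := by
    rw [Finset.mul_sum, Finset.mul_sum, ← Finset.sum_sub_distrib]
    refine Finset.sum_congr rfl fun k _ => ?_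
    rcases Nat.eq_zero_or_pos k with rfl | hk
    · simp; ring
    · obtain ⟨j, rfl⟩ : ∃ j, k = j + 1 := ⟨k - 1, by omega⟩
      rw [Nat.add_sub_cancel]
      push_cast
      ring
  rw [hL]
  have hR : ∑ k ∈ Finset.range (n + 1), aa (n + 1) k * t ^ k
      = ∑ k ∈ Finset.range (n + 1), ((((n : ℝ) + 1 / 2 - (k : ℝ)) * aa n k) * t ^ k
          + (if k = 0 then 0 else -(n : ℝ) ^ 2 * aa n (k - 1)) * t ^ k) := by
    refine Finset.sum_congr rfl fun k _ => ?_
    rw [aa_rec n k hn, add_mul]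
  rw [hR, Finset.sum_add_distrib]
  have hA : ∑ k ∈ Finset.range (n + 1), (((n : ℝ) + 1 / 2 - (k : ℝ)) * aa n k) * t ^ k
      = ∑ k ∈ Finset.range n, (((n : ℝ) + 1 / 2 - (k : ℝ)) * aa n k) * t ^ k := by
    rw [Finset.sum_range_succ, aa_top n hn]
    simp
  have hB : ∑ k ∈ Finset.range (n + 1),
        (if k = 0 then 0 else -(n : ℝ) ^ 2 * aa n (k - 1)) * t ^ k
      = ∑ k ∈ Finset.range n, -(n : ℝ) ^ 2 * aa n k * t ^ (k + 1) := by
    rw [Finset.sum_range_succ']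
    simp [Nat.add_sub_cancel]
  rw [hA, hB, ← Finset.sum_add_distrib]
  refine Finset.sum_congr rfl fun k _ => ?_
  ring

/-- The polynomials defined by `q₀ = Γ(1/2)` and the recurrence
`q_m(t) = (m - 1/2 - (m-1)² t) q_{m-1}(t) - t q'_{m-1}(t)` satisfy
`q_m(t) = Σ_{k=0}^{m-1} (-1)^k Γ(m-k+1/2) c_{m,k} t^k` for every `m ≥ 1`. -/
theorem spherical_diagonal_polynomials (q : ℕ → ℝ → ℝ)
    (hq0 : ∀ t : ℝ, q 0 t = Real.Gamma (1 / 2))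
    (hqrec : ∀ m : ℕ, 1 ≤ m → ∀ t : ℝ,
      q m t = ((m : ℝ) - 1 / 2 - ((m : ℝ) - 1) ^ 2 * t) * q (m - 1) t -
        t * deriv (q (m - 1)) t) :
    ∀ m : ℕ, 1 ≤ m → ∀ t : ℝ,
      q m t = ∑ k ∈ Finset.range m,
        (-1 : ℝ) ^ k * Real.Gamma ((m : ℝ) - (k : ℝ) + 1 / 2) * c m k * t ^ k := by
  intro m
  induction m with
  | zero => omega
  | succ n ih =>
    intro _ t
    show q (n + 1) t = ∑ k ∈ Finset.range (n + 1), aa (n + 1) k * t ^ k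
    have hstep := hqrec (n + 1) (by omega) t
    simp only [Nat.add_sub_cancel, Nat.cast_add, Nat.cast_one, add_sub_cancel_right] at hstep
    rcases Nat.eq_zero_or_pos n with rfl | hn
    · have hc : q 0 = fun _ => Real.Gamma (1 / 2) := funext hq0
      rw [hstep, hc]
      simp only [deriv_const']
      rw [Finset.sum_range_one]
      simp only [aa, c_zero, pow_zero, Nat.cast_zero, Nat.cast_one, one_mul, mul_one]
      have h32 : ((0 + 1 : ℕ) : ℝ) - 0 + 1 / 2 = 1 / 2 + 1 := by norm_num
      rw [h32, Real.Gamma_add_one (by norm_num)]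
      ring
    · have IH : ∀ s : ℝ, q n s = ∑ k ∈ Finset.range n, aa n k * s ^ k := fun s => ih hn s
      have hqn : q n = fun s => ∑ k ∈ Finset.range n, aa n k * s ^ k := funext IH
      have hD : deriv (q n) t = ∑ k ∈ Finset.range n, aa n k * ((k : ℝ) * t ^ (k - 1)) := by
        rw [hqn]
        exact (HasDerivAt.fun_sum fun k _ => (hasDerivAt_pow k t).const_mul (aa n k)).deriv
      rw [hstep, hD, IH t, ← key n hn t]
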